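/- Let A and B be n×n complex matrices such that 0 is a semisimple eigenvalue of both A and B (i.e., ker A = ker A² and ker B = ker B²). If det(I - sA - tB) = det(I - sA)·det(I - tB) for all scalars s, t, then rank(A) + rank(B) ≤ n. -/

import Mathlib

open Matrix Polynomial

private lemma ker_pow_succ_eq {K V : Type*} [Field K] [AddCommGroup V] [Module K V]
    (φ : Module.End K V) (h : LinearMap.ker φ = LinearMap.ker (φ * φ)) (k : ℕ) :
    LinearMap.ker (φ ^ (k + 1)) = LinearMap.ker φ := by
  induction k with
  | zero => simp
  | succ k ih =>
    ext x
    simp only [LinearMap.mem_ker]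
    constructor
    · intro hx
      have h1 : (φ ^ (k + 1)) (φ x) = 0 := by
        rw [← Module.End.mul_apply, ← pow_succ]
        exact hx
      have h2 : φ (φ x) = 0 := by
        have := ih ▸ (LinearMap.mem_ker.mpr h1)
        exact this
      have : x ∈ LinearMap.ker (φ * φ) := LinearMap.mem_ker.mpr (by
        simpa [Module.End.mul_apply] using h2)
      rw [← h] at this
      exact this
    · intro hx
      rw [pow_succ, Module.End.mul_apply, hx, map_zero]

private lemma maxGen_eq_ker {K V : Type*} [Field K] [AddCommGroup V] [Module K V]
    (φ : Module.End K V) (h : LinearMap.ker φ = LinearMap.ker (φ * φ)) :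
    φ.maxGenEigenspace 0 = LinearMap.ker φ := by
  ext x
  rw [Module.End.mem_maxGenEigenspace]
  simp only [zero_smul, sub_zero]
  constructor
  · rintro ⟨k, hk⟩
    cases k with
    | zero => simp at hk; simp [hk]
    | succ k =>
      exact (ker_pow_succ_eq φ h k) ▸ LinearMap.mem_ker.mpr hk
  · intro hx
    exact ⟨1, by simpa using hx⟩

private lemma eval_charpolyRev' {n : ℕ} (M : Matrix (Fin n) (Fin n) ℂ) (s : ℂ) :
    (M.charpolyRev).eval s = (1 - s • M).det := by
  rw [charpolyRev, ← coe_evalRingHom, RingHom.map_det]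
  congr 1
  ext i j
  rcases eq_or_ne i j with rfl | hij
  · simp [RingHom.mapMatrix_apply, Matrix.map_apply, Matrix.one_apply, mul_comm s]
  · simp [RingHom.mapMatrix_apply, Matrix.map_apply, Matrix.one_apply, hij, mul_comm s]

/-- Under semisimplicity of the 0 eigenvalue, `charpolyRev` has degree equal to the rank. -/
private lemma natDegree_charpolyRev {n : ℕ} (M : Matrix (Fin n) (Fin n) ℂ)
    (hM : LinearMap.ker M.mulVecLin = LinearMap.ker (M * M).mulVecLin) :
    M.charpolyRev.natDegree = M.rank := by
  have hker : LinearMap.ker M.mulVecLin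
      = LinearMap.ker (M.mulVecLin * M.mulVecLin) := by
    rw [hM, Matrix.mulVecLin_mul]; rfl
  have hcp : (M.mulVecLin : Module.End ℂ (Fin n → ℂ)).charpoly = M.charpoly := by
    rw [← LinearMap.charpoly_toMatrix M.mulVecLin (Pi.basisFun ℂ (Fin n)),
      LinearMap.toMatrix_eq_toMatrix', ← Matrix.toLin'_apply', LinearMap.toMatrix'_toLin']
  have htd : M.charpoly.natTrailingDegree = Module.finrank ℂ (LinearMap.ker M.mulVecLin) := by
    rw [← hcp, ← LinearMap.finrank_maxGenEigenspace_zero_eq, maxGen_eq_ker _ hker]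
  have hrn : M.rank + Module.finrank ℂ (LinearMap.ker M.mulVecLin) = n := by
    have := LinearMap.finrank_range_add_finrank_ker M.mulVecLin
    simpa [Matrix.rank] using this
  have hnd : M.charpoly.natDegree = n := by
    simp [Matrix.charpoly_natDegree_eq_dim]
  rw [← Matrix.reverse_charpoly, Polynomial.reverse_natDegree, htd, hnd]
  omega

theorem stmt3 (n : ℕ) (A B : Matrix (Fin n) (Fin n) ℂ)
    (hA : LinearMap.ker A.mulVecLin = LinearMap.ker (A * A).mulVecLin)
    (hB : LinearMap.ker B.mulVecLin = LinearMap.ker (B * B).mulVecLin)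
    (hCS : ∀ s t : ℂ, (1 - s • A - t • B).det = (1 - s • A).det * (1 - t • B).det) :
    A.rank + B.rank ≤ n := by
  have hPQ : (A + B).charpolyRev = A.charpolyRev * B.charpolyRev := by
    apply Polynomial.funext
    intro s
    rw [eval_mul, eval_charpolyRev', eval_charpolyRev', eval_charpolyRev',
      smul_add, ← sub_sub]
    exact hCS s s
  have hAne : A.charpolyRev ≠ 0 := fun h => by
    have := Matrix.eval_charpolyRev (M := A)
    rw [h] at this; simp at this
  have hBne : B.charpolyRev ≠ 0 := fun h => by
    have := Matrix.eval_charpolyRev (M := B)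
    rw [h] at this; simp at this
  have hdeg : A.charpolyRev.natDegree + B.charpolyRev.natDegree
      = ((A + B).charpolyRev).natDegree := by
    rw [hPQ, Polynomial.natDegree_mul hAne hBne]
  have hle : ((A + B).charpolyRev).natDegree ≤ n := by
    rw [← Matrix.reverse_charpoly]
    refine le_trans (Polynomial.reverse_natDegree_le _) ?_
    simp [Matrix.charpoly_natDegree_eq_dim]
  rw [← natDegree_charpolyRev A hA, ← natDegree_charpolyRev B hB, hdeg]
  exact hle
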